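/- arXiv:2406.01957 — 8 statements merged into one kernel-verified Lean document; each statement's English description precedes it below -/
import Mathlib

section
/- The kernel function x̂₅ belongs to W^{1,1}(0,∞), i.e., x̂₅ and its derivative x̂₅′ are Lebesgue integrable on (0,∞); moreover x̂₅(τ) → 0 as τ → ∞. -/
open MeasureTheory Real Set Filter

/-- `|exp(-a) - exp(-b)| ≤ exp(-m) * |a-b|` when `m ≤ a, b`. -/
lemma aux_exp_lip {a b m : ℝ} (ha : m ≤ a) (hb : m ≤ b) :
    |Real.exp (-a) - Real.exp (-b)| ≤ Real.exp (-m) * |a - b| := by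
  have key : ∀ x y : ℝ, m ≤ x → m ≤ y → x ≤ y →
      Real.exp (-x) - Real.exp (-y) ≤ Real.exp (-m) * |x - y| := by
    intro x y hx hy hxy
    have h1 : Real.exp (-x) - Real.exp (-y) = Real.exp (-x) * (1 - Real.exp (-(y - x))) := by
      rw [mul_sub, mul_one, ← Real.exp_add]; ring_nf
    have h2 : 1 - Real.exp (-(y - x)) ≤ y - x := by
      have := Real.add_one_le_exp (-(y - x)); linarith
    have h3 : Real.exp (-x) ≤ Real.exp (-m) := Real.exp_le_exp.2 (by linarith)
    have h4 : 0 ≤ 1 - Real.exp (-(y - x)) := by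
      have : Real.exp (-(y - x)) ≤ 1 := Real.exp_le_one_iff.2 (by linarith)
      linarith
    calc Real.exp (-x) - Real.exp (-y) = Real.exp (-x) * (1 - Real.exp (-(y - x))) := h1
      _ ≤ Real.exp (-m) * (y - x) := by
          exact mul_le_mul h3 h2 h4 (Real.exp_pos _).le
      _ ≤ Real.exp (-m) * |x - y| := by
          rw [abs_sub_comm]
          exact mul_le_mul_of_nonneg_left (le_abs_self _) (Real.exp_pos _).le
  rcases le_total a b with h | h
  · rw [abs_of_nonneg (by have := Real.exp_le_exp.2 (neg_le_neg h); linarith)]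
    exact key a b ha hb h
  · rw [abs_of_nonpos (by have := Real.exp_le_exp.2 (neg_le_neg h); linarith), neg_sub,
      abs_sub_comm]
    exact key b a hb ha h

/-- `(A + B*τ) * exp(-(2u)τ) ≤ (A + B/u) * exp(-uτ)` for `τ ≥ 0`. -/
lemma aux_lin_exp {A B u τ : ℝ} (hA : 0 ≤ A) (hB : 0 ≤ B) (hu : 0 < u) (hτ : 0 ≤ τ) :
    (A + B * τ) * Real.exp (-(2 * u) * τ) ≤ (A + B / u) * Real.exp (-u * τ) := by
  have hτu : τ ≤ (1 / u) * Real.exp (u * τ) := by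
    have h := Real.add_one_le_exp (u * τ)
    have h2 : u * τ ≤ Real.exp (u * τ) := by linarith
    calc τ = u * τ / u := by field_simp
      _ ≤ Real.exp (u * τ) / u := (div_le_div_iff_of_pos_right hu).2 h2
      _ = 1 / u * Real.exp (u * τ) := by ring
  have e1 : Real.exp (-(2 * u) * τ) ≤ Real.exp (-u * τ) :=
    Real.exp_le_exp.2 (by nlinarith)
  have e2 : B * τ * Real.exp (-(2 * u) * τ) ≤ B / u * Real.exp (-u * τ) := by
    have : τ * Real.exp (-(2 * u) * τ) ≤ 1 / u * Real.exp (-u * τ) := by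
      calc τ * Real.exp (-(2 * u) * τ) ≤ (1 / u * Real.exp (u * τ)) * Real.exp (-(2 * u) * τ) :=
            mul_le_mul_of_nonneg_right hτu (Real.exp_pos _).le
        _ = 1 / u * Real.exp (-u * τ) := by rw [mul_assoc, ← Real.exp_add]; ring_nf
    calc B * τ * Real.exp (-(2 * u) * τ) = B * (τ * Real.exp (-(2 * u) * τ)) := by ring
      _ ≤ B * (1 / u * Real.exp (-u * τ)) := mul_le_mul_of_nonneg_left this hB
      _ = B / u * Real.exp (-u * τ) := by ring
  calc (A + B * τ) * Real.exp (-(2 * u) * τ)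
      = A * Real.exp (-(2 * u) * τ) + B * τ * Real.exp (-(2 * u) * τ) := by ring
    _ ≤ A * Real.exp (-u * τ) + B / u * Real.exp (-u * τ) :=
        add_le_add (mul_le_mul_of_nonneg_left e1 hA) e2
    _ = (A + B / u) * Real.exp (-u * τ) := by ring

lemma aux_int_exp {D u : ℝ} (hu : 0 < u) :
    IntegrableOn (fun τ => D * Real.exp (-u * τ)) (Set.Ioi (0:ℝ)) :=
  (exp_neg_integrableOn_Ioi 0 hu).const_mul D

/-- the kernel function `x̂₅` belongs to `W^{1,1}(0,∞)`: `x̂₅` and its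
derivative `x̂₅′` are Lebesgue integrable on `(0,∞)`, and `x̂₅(τ) → 0` as `τ → ∞`. -/
theorem stmt6
    (Λ u μ σ γA γI α βs ρ θ ε βbar : ℝ)
    (hΛ : 0 < Λ) (hu : 0 < u) (hμ : 0 < μ) (hσ : 0 < σ)
    (hγA : 0 < γA) (hγI : 0 < γI) (hα : 0 < α) (hβs : 0 < βs)
    (hρ0 : 0 < ρ) (hρ1 : ρ < 1) (hθ0 : 0 < θ) (hθ1 : θ ≤ 1)
    (hε0 : 0 < ε) (hε1 : ε ≤ 1) (hβbar : 0 < βbar)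
    (βr0 : ℝ → ℝ) (hmeas : Measurable βr0)
    (hβr0 : ∀ τ, 0 ≤ τ → 0 < βr0 τ ∧ βr0 τ ≤ 1)
    (S0 : ℝ) (hS0 : S0 = Λ / (α + u))
    (r0 : ℝ → ℝ) (hr0 : ∀ τ, r0 τ = α * Λ / (α + u) * Real.exp (-u * τ))
    (N0 : ℝ) (hN0 : N0 = S0 + ∫ τ in Set.Ioi (0:ℝ), r0 τ)
    (K : ℝ) (hK : K = θ + (1 - ρ) * σ * ε / (γA + u) + ρ * σ / (γI + μ + u))
    (x1 : ℝ) (hx1 : x1 = -(βs * S0 * K) / ((α + u) * N0))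
    (x3 : ℝ) (hx3 : x3 = (1 - ρ) * σ / (γA + u))
    (x4 : ℝ) (hx4 : x4 = ρ * σ / (γI + μ + u))
    (x50 : ℝ) (hx50 : x50 = α * x1 + γA * x3 + γI * x4)
    (x5 : ℝ → ℝ)
    (hx5 : ∀ τ, x5 τ =
      (x50 - βbar * K / N0 * ∫ h in (0:ℝ)..τ, βr0 h * r0 h * Real.exp (u * h)) *
        Real.exp (-u * τ)) :
    IntegrableOn x5 (Set.Ioi 0) ∧
    IntegrableOn (deriv x5) (Set.Ioi 0) ∧
    Filter.Tendsto x5 Filter.atTop (nhds 0) := by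
  have huα : (0:ℝ) < α + u := by linarith
  set C : ℝ := α * Λ / (α + u) with hCdef
  have hC : 0 < C := div_pos (mul_pos hα hΛ) huα
  set c : ℝ := βbar * K / N0 with hcdef
  -- the integrand equals `βr0 h * C` everywhere
  have hgC : ∀ h : ℝ, βr0 h * r0 h * Real.exp (u * h) = βr0 h * C := by
    intro h
    have he : Real.exp (-u * h) * Real.exp (u * h) = 1 := by
      rw [← Real.exp_add, show -u * h + u * h = 0 by ring, Real.exp_zero]
    calc βr0 h * r0 h * Real.exp (u * h)
        = βr0 h * C * (Real.exp (-u * h) * Real.exp (u * h)) := by rw [hr0]; ring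
      _ = βr0 h * C := by rw [he, mul_one]
  -- truncated integrand
  obtain ⟨g', hg'def⟩ : ∃ g' : ℝ → ℝ, g' = (Set.Ici (0:ℝ)).indicator (fun h => βr0 h * C) :=
    ⟨_, rfl⟩
  have hg'meas : Measurable g' := by
    rw [hg'def]; exact (hmeas.mul measurable_const).indicator measurableSet_Ici
  have hg'bd : ∀ h, |g' h| ≤ C := by
    intro h
    by_cases hh : h ∈ Set.Ici (0:ℝ)
    · rw [hg'def, Set.indicator_of_mem hh]
      obtain ⟨hb0, hb1⟩ := hβr0 h hh
      rw [abs_of_nonneg (mul_nonneg hb0.le hC.le)]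
      calc βr0 h * C ≤ 1 * C := mul_le_mul_of_nonneg_right hb1 hC.le
        _ = C := one_mul C
    · rw [hg'def, Set.indicator_of_notMem hh, abs_zero]; exact hC.le
  have hII : ∀ a b : ℝ, IntervalIntegrable g' volume a b := by
    intro a b
    rw [intervalIntegrable_iff]
    refine Measure.integrableOn_of_bounded (M := C) measure_Ioc_lt_top.ne
      hg'meas.aestronglyMeasurable ?_
    exact ae_of_all _ fun x => by rw [Real.norm_eq_abs]; exact hg'bd x
  obtain ⟨F, hFdef⟩ : ∃ F : ℝ → ℝ, F = fun τ => ∫ h in (0:ℝ)..τ, g' h := ⟨_, rfl⟩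
  have hFapp : ∀ τ : ℝ, F τ = ∫ h in (0:ℝ)..τ, g' h := fun τ => by rw [hFdef]
  have hFcont : Continuous F := by
    rw [hFdef]; exact intervalIntegral.continuous_primitive hII 0
  have hFdiff : ∀ s t : ℝ, |F t - F s| ≤ C * |t - s| := by
    intro s t
    have h1 : F t - F s = ∫ h in s..t, g' h := by
      rw [hFapp, hFapp]
      exact intervalIntegral.integral_interval_sub_left (hII 0 t) (hII 0 s)
    rw [h1, ← Real.norm_eq_abs]
    exact intervalIntegral.norm_integral_le_of_norm_le_const fun x _ => by
      rw [Real.norm_eq_abs]; exact hg'bd x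
  have hF0 : F 0 = 0 := by rw [hFapp, intervalIntegral.integral_same]
  have hFabs : ∀ t : ℝ, |F t| ≤ C * |t| := by
    intro t
    have h := hFdiff 0 t
    rw [hF0, sub_zero, sub_zero] at h
    exact h
  have hFeq : ∀ τ : ℝ, 0 ≤ τ →
      (∫ h in (0:ℝ)..τ, βr0 h * r0 h * Real.exp (u * h)) = F τ := by
    intro τ hτ
    rw [hFapp]
    refine intervalIntegral.integral_congr fun h hh => ?_
    rw [Set.uIcc_of_le hτ] at hh
    show βr0 h * r0 h * Real.exp (u * h) = g' h
    rw [hgC h, hg'def, Set.indicator_of_mem (Set.mem_Ici.2 hh.1)]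
  obtain ⟨x5t, hx5tdef⟩ : ∃ x5t : ℝ → ℝ,
      x5t = fun τ => (x50 - c * F τ) * Real.exp (-u * τ) := ⟨_, rfl⟩
  have hx5tapp : ∀ τ, x5t τ = (x50 - c * F τ) * Real.exp (-u * τ) := fun τ => by
    rw [hx5tdef]
  have hx5tcont : Continuous x5t := by
    rw [hx5tdef]
    exact (continuous_const.sub (continuous_const.mul hFcont)).mul
      (Real.continuous_exp.comp (continuous_const.mul continuous_id))
  have hEq : ∀ τ : ℝ, 0 ≤ τ → x5 τ = x5t τ := by
    intro τ hτ
    rw [hx5 τ, hFeq τ hτ, hx5tapp]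
  -- pointwise bound on x5t
  set M : ℝ := |x50| + |c| * C / (u / 2) with hMdef
  have hbd : ∀ τ : ℝ, 0 ≤ τ → |x5t τ| ≤ M * Real.exp (-(u / 2) * τ) := by
    intro τ hτ
    have h1 : |x5t τ| ≤ (|x50| + |c| * C * τ) * Real.exp (-u * τ) := by
      rw [hx5tapp, abs_mul, Real.abs_exp]
      apply mul_le_mul_of_nonneg_right _ (Real.exp_pos _).le
      calc |x50 - c * F τ| ≤ |x50| + |c * F τ| := abs_sub _ _
        _ = |x50| + |c| * |F τ| := by rw [abs_mul]
        _ ≤ |x50| + |c| * (C * |τ|) := by gcongr; exact hFabs τ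
        _ = |x50| + |c| * C * τ := by rw [abs_of_nonneg hτ]; ring
    have h2 := aux_lin_exp (abs_nonneg x50) (by positivity : (0:ℝ) ≤ |c| * C)
      (half_pos hu) hτ
    rw [show -(2 * (u / 2)) * τ = -u * τ by ring] at h2
    exact le_trans h1 (le_of_le_of_eq h2 (by rw [hMdef]))
  have hx5tInt : IntegrableOn x5t (Set.Ioi 0) := by
    refine Integrable.mono' (aux_int_exp (half_pos hu) (D := M))
      hx5tcont.aestronglyMeasurable.restrict ?_
    rw [ae_restrict_iff' measurableSet_Ioi]
    exact ae_of_all _ fun τ hτ => by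
      rw [Real.norm_eq_abs]; exact hbd τ (le_of_lt hτ)
  have hInt1 : IntegrableOn x5 (Set.Ioi 0) :=
    hx5tInt.congr_fun (fun τ hτ => (hEq τ (le_of_lt hτ)).symm) measurableSet_Ioi
  -- derivative bound
  obtain ⟨L, hLapp⟩ : ∃ L : ℝ → ℝ, ∀ τ, L τ = (u * (|x50| + |c| * C * (τ + 1)) + |c| * C) *
      Real.exp (-(u / 2) * τ) := ⟨_, fun τ => rfl⟩
  have hderiv_bd : ∀ τ : ℝ, 0 < τ → |deriv x5 τ| ≤ L τ := by
    intro τ hτ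
    rw [← Real.norm_eq_abs, hLapp]
    apply norm_deriv_le_of_lip' (by positivity)
    filter_upwards [Ioo_mem_nhds (by linarith : τ / 2 < τ) (by linarith : τ < τ + 1)]
      with t ht
    obtain ⟨ht1, ht2⟩ := ht
    have ht0 : (0:ℝ) < t := lt_trans (by linarith) ht1
    rw [hEq t ht0.le, hEq τ hτ.le]
    have hdecomp : x5t t - x5t τ =
        (x50 - c * F t) * (Real.exp (-u * t) - Real.exp (-u * τ)) +
          c * (F τ - F t) * Real.exp (-u * τ) := by
      rw [hx5tapp, hx5tapp]; ring
    have ha : |x50 - c * F t| ≤ |x50| + |c| * C * (τ + 1) := by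
      calc |x50 - c * F t| ≤ |x50| + |c * F t| := abs_sub _ _
        _ = |x50| + |c| * |F t| := by rw [abs_mul]
        _ ≤ |x50| + |c| * (C * |t|) := by gcongr; exact hFabs t
        _ ≤ |x50| + |c| * C * (τ + 1) := by
            rw [abs_of_pos ht0]
            have h9 : |c| * (C * t) ≤ |c| * (C * (τ + 1)) := by gcongr
            linarith [h9]
    have hb : |Real.exp (-u * t) - Real.exp (-u * τ)| ≤
        Real.exp (-(u / 2) * τ) * (u * |t - τ|) := by
      have hm1 : u * (τ / 2) ≤ u * t := mul_le_mul_of_nonneg_left ht1.le hu.le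
      have hm2 : u * (τ / 2) ≤ u * τ := mul_le_mul_of_nonneg_left (by linarith) hu.le
      have hel := aux_exp_lip hm1 hm2
      rw [show -(u * (τ / 2)) = -(u / 2) * τ by ring] at hel
      calc |Real.exp (-u * t) - Real.exp (-u * τ)|
          = |Real.exp (-(u * t)) - Real.exp (-(u * τ))| := by rw [neg_mul, neg_mul]
        _ ≤ Real.exp (-(u / 2) * τ) * |u * t - u * τ| := hel
        _ = Real.exp (-(u / 2) * τ) * (u * |t - τ|) := by
            rw [← mul_sub, abs_mul, abs_of_pos hu]
    have hc2 : |F τ - F t| ≤ C * |t - τ| := by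
      calc |F τ - F t| ≤ C * |τ - t| := hFdiff t τ
        _ = C * |t - τ| := by rw [abs_sub_comm]
    have hexp2 : Real.exp (-u * τ) ≤ Real.exp (-(u / 2) * τ) := by
      apply Real.exp_le_exp.2
      have h0 : 0 ≤ u / 2 * τ := mul_nonneg (by linarith) hτ.le
      linarith
    calc ‖x5t t - x5t τ‖
        = |x5t t - x5t τ| := Real.norm_eq_abs _
      _ ≤ |x50 - c * F t| * |Real.exp (-u * t) - Real.exp (-u * τ)| +
          |c| * |F τ - F t| * Real.exp (-u * τ) := by
          rw [hdecomp]
          refine le_trans (abs_add_le _ _) ?_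
          rw [abs_mul, abs_mul, abs_mul, Real.abs_exp]
      _ ≤ (|x50| + |c| * C * (τ + 1)) * (Real.exp (-(u / 2) * τ) * (u * |t - τ|)) +
          |c| * (C * |t - τ|) * Real.exp (-(u / 2) * τ) := by
          refine add_le_add (mul_le_mul ha hb (abs_nonneg _) ?_) ?_
          · exact le_trans (abs_nonneg _) ha
          · exact mul_le_mul (mul_le_mul_of_nonneg_left hc2 (abs_nonneg _)) hexp2
              (Real.exp_pos _).le (by positivity)
      _ = ((u * (|x50| + |c| * C * (τ + 1)) + |c| * C) * Real.exp (-(u / 2) * τ)) *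
            |t - τ| := by ring
      _ = ((u * (|x50| + |c| * C * (τ + 1)) + |c| * C) * Real.exp (-(u / 2) * τ)) *
            ‖t - τ‖ := by rw [Real.norm_eq_abs]
  -- integrability of deriv
  set A : ℝ := u * (|x50| + |c| * C) + |c| * C with hAdef
  set B : ℝ := u * (|c| * C) with hBdef
  have hLform : ∀ τ : ℝ, L τ = (A + B * τ) * Real.exp (-(u / 2) * τ) := by
    intro τ; rw [hLapp, hAdef, hBdef]; ring_nf
  set D : ℝ := A + B / (u / 4) with hDdef
  have hLbd : ∀ τ : ℝ, 0 ≤ τ → L τ ≤ D * Real.exp (-(u / 4) * τ) := by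
    intro τ hτ
    rw [hLform τ]
    have h := aux_lin_exp (by rw [hAdef]; positivity : (0:ℝ) ≤ A)
      (by rw [hBdef]; positivity : (0:ℝ) ≤ B) (by linarith : (0:ℝ) < u / 4) hτ
    rw [show -(2 * (u / 4)) * τ = -(u / 2) * τ by ring] at h
    exact le_of_le_of_eq h (by rw [hDdef])
  have hInt2 : IntegrableOn (deriv x5) (Set.Ioi 0) := by
    refine Integrable.mono' (aux_int_exp (by linarith : (0:ℝ) < u / 4) (D := D))
      (measurable_deriv x5).aestronglyMeasurable.restrict ?_
    rw [ae_restrict_iff' measurableSet_Ioi]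
    refine ae_of_all _ fun τ hτ => ?_
    rw [Real.norm_eq_abs]
    exact le_trans (hderiv_bd τ hτ) (hLbd τ (le_of_lt hτ))
  refine ⟨hInt1, hInt2, ?_⟩
  -- tendsto
  have htend : Tendsto (fun τ => M * Real.exp (-(u / 2) * τ)) atTop (nhds 0) := by
    have h1 : Tendsto (fun τ : ℝ => -(u / 2) * τ) atTop atBot :=
      Tendsto.const_mul_atTop_of_neg (by linarith) tendsto_id
    simpa using (Real.tendsto_exp_atBot.comp h1).const_mul M
  apply squeeze_zero_norm' _ htend
  filter_upwards [eventually_ge_atTop (0:ℝ)] with τ hτ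
  rw [Real.norm_eq_abs, hEq τ hτ]
  exact hbd τ hτ
end

section
/- Suppose R₀ = 1. Then every solution (x₁,x₂,x₃,x₄,x₅) of the linearized system at the disease-free equilibrium is a scalar multiple of x̂: namely x₁ = x₂·x̂₁, x₃ = x₂·x̂₃, x₄ = x₂·x̂₄, and x₅(τ) = x₂·x̂₅(τ) for all τ ≥ 0. Hence the kernel of the linearization is one-dimensional, spanned by x̂. -/
open MeasureTheory Real Set Filter

/-- if `R₀ = 1`, every solution `(x₁,…,x₅)` of the linearized system
(i)–(vi) at the disease-free equilibrium is a scalar multiple of `x̂`: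
`x₁ = x₂·x̂₁`, `x₃ = x₂·x̂₃`, `x₄ = x₂·x̂₄` and `x₅(τ) = x₂·x̂₅(τ)` for all `τ ≥ 0`;
hence the kernel is one-dimensional, spanned by `x̂`. -/
theorem stmt7
    (Λ u μ σ γA γI α βs ρ θ ε βbar : ℝ)
    (hΛ : 0 < Λ) (hu : 0 < u) (hμ : 0 < μ) (hσ : 0 < σ)
    (hγA : 0 < γA) (hγI : 0 < γI) (hα : 0 < α) (hβs : 0 < βs)
    (hρ0 : 0 < ρ) (hρ1 : ρ < 1) (hθ0 : 0 < θ) (hθ1 : θ ≤ 1)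
    (hε0 : 0 < ε) (hε1 : ε ≤ 1) (hβbar : 0 < βbar)
    (βr0 : ℝ → ℝ) (hmeas : Measurable βr0)
    (hβr0 : ∀ τ, 0 ≤ τ → 0 < βr0 τ ∧ βr0 τ ≤ 1)
    (S0 : ℝ) (hS0 : S0 = Λ / (α + u))
    (r0 : ℝ → ℝ) (hr0 : ∀ τ, r0 τ = α * Λ / (α + u) * Real.exp (-u * τ))
    (N0 : ℝ) (hN0 : N0 = S0 + ∫ τ in Set.Ioi (0:ℝ), r0 τ)
    (K : ℝ) (hK : K = θ + (1 - ρ) * σ * ε / (γA + u) + ρ * σ / (γI + μ + u))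
    (R0 : ℝ)
    (hR0def : R0 = (βs * S0 + βbar * ∫ τ in Set.Ioi (0:ℝ), βr0 τ * r0 τ) * K / ((σ + u) * N0))
    (B : ℝ) (hB : B = (βs * S0 + βbar * ∫ τ in Set.Ioi (0:ℝ), βr0 τ * r0 τ) / N0)
    (D : ℝ) (hD : D = βs * S0 / N0)
    (Ee : ℝ → ℝ) (hEe : ∀ τ, Ee τ = βbar * βr0 τ * r0 τ / N0)
    -- the vector x̂ spanning the kernel
    (xh1 : ℝ) (hxh1 : xh1 = -(βs * S0 * K) / ((α + u) * N0))
    (xh2 : ℝ) (hxh2 : xh2 = 1)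
    (xh3 : ℝ) (hxh3 : xh3 = (1 - ρ) * σ / (γA + u))
    (xh4 : ℝ) (hxh4 : xh4 = ρ * σ / (γI + μ + u))
    (xh50 : ℝ) (hxh50 : xh50 = α * xh1 + γA * xh3 + γI * xh4)
    (xh5 : ℝ → ℝ)
    (hxh5 : ∀ τ, xh5 τ =
      (xh50 - βbar * K / N0 * ∫ h in (0:ℝ)..τ, βr0 h * r0 h * Real.exp (u * h)) *
        Real.exp (-u * τ))
    -- an arbitrary solution of the linearized system (i)--(vi)
    (x1 x2 x3 x4 : ℝ) (x5 : ℝ → ℝ)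
    (h1 : -(α + u) * x1 - D * (θ * x2 + ε * x3 + x4) = 0)
    (h2 : B * (θ * x2 + ε * x3 + x4) - (σ + u) * x2 = 0)
    (h3 : (1 - ρ) * σ * x2 - (γA + u) * x3 = 0)
    (h4 : ρ * σ * x2 - (γI + μ + u) * x4 = 0)
    (h5 : ∀ τ, 0 ≤ τ →
      HasDerivAt x5 (-(Ee τ) * (θ * x2 + ε * x3 + x4) - u * x5 τ) τ)
    (h6 : x5 0 = α * x1 + γA * x3 + γI * x4)
    (hR0 : R0 = 1) :
    x1 = x2 * xh1 ∧ x3 = x2 * xh3 ∧ x4 = x2 * xh4 ∧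
    ∀ τ, 0 ≤ τ → x5 τ = x2 * xh5 τ := by
  have hαu : (0:ℝ) < α + u := by linarith
  have hαune : α + u ≠ 0 := ne_of_gt hαu
  have hγAu : γA + u ≠ 0 := by positivity
  have hγIu : γI + μ + u ≠ 0 := by positivity
  have hS0pos : 0 < S0 := by rw [hS0]; positivity
  have hIntnn : 0 ≤ ∫ τ in Set.Ioi (0:ℝ), r0 τ := by
    apply MeasureTheory.setIntegral_nonneg measurableSet_Ioi
    intro t _
    rw [hr0]
    positivity
  have hN0pos : 0 < N0 := by rw [hN0]; linarith
  have hN0ne : N0 ≠ 0 := ne_of_gt hN0pos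
  have hx3 : x3 = x2 * xh3 := by
    rw [hxh3]
    field_simp
    linarith [h3]
  have hx4 : x4 = x2 * xh4 := by
    rw [hxh4]
    field_simp
    linarith [h4]
  have hM : θ * x2 + ε * x3 + x4 = x2 * K := by
    rw [hx3, hx4, hxh3, hxh4, hK]
    field_simp
  have hx1 : x1 = x2 * xh1 := by
    rw [hM, hD] at h1
    rw [hxh1]
    field_simp at h1 ⊢
    linarith [h1]
  have hx50 : x5 0 = x2 * xh50 := by
    rw [h6, hx1, hx3, hx4, hxh50]; ring
  refine ⟨hx1, hx3, hx4, ?_⟩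
  intro τ hτ
  set C : ℝ := α * Λ / (α + u) with hC
  have hrexp : ∀ h : ℝ, βr0 h * r0 h * Real.exp (u * h) = C * βr0 h := by
    intro h
    rw [hr0]
    have e : Real.exp (-u * h) * Real.exp (u * h) = 1 := by
      rw [← Real.exp_add]
      norm_num
    linear_combination (βr0 h * C) * e
  have hintb : IntervalIntegrable βr0 volume 0 τ := by
    rw [intervalIntegrable_iff, Set.uIoc_of_le hτ]
    have hcst : MeasureTheory.IntegrableOn (fun _ : ℝ => (1:ℝ)) (Set.Ioc 0 τ) :=
      MeasureTheory.integrableOn_const (ne_of_lt measure_Ioc_lt_top) (by simp)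
    apply MeasureTheory.Integrable.mono' hcst
    · exact hmeas.aestronglyMeasurable
    · filter_upwards [MeasureTheory.ae_restrict_mem measurableSet_Ioc] with t ht
      have hb := hβr0 t (le_of_lt ht.1)
      rw [Real.norm_eq_abs, abs_of_pos hb.1]
      exact hb.2
  have hint : IntervalIntegrable (fun h => βr0 h * r0 h * Real.exp (u * h)) volume 0 τ := by
    have heq : (fun h => βr0 h * r0 h * Real.exp (u * h)) = fun h => C * βr0 h :=
      funext hrexp
    rw [heq]
    exact hintb.const_mul C
  have hderiv : ∀ t ∈ Set.uIcc (0:ℝ) τ,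
      HasDerivAt (fun s => x5 s * Real.exp (u * s))
        (-(x2 * K * βbar / N0) * (βr0 t * r0 t * Real.exp (u * t))) t := by
    intro t ht
    rw [Set.uIcc_of_le hτ] at ht
    have hd1 := h5 t ht.1
    have hd2 : HasDerivAt (fun s : ℝ => Real.exp (u * s)) (Real.exp (u * t) * u) t := by
      have h := ((hasDerivAt_id t).const_mul u).exp
      simp only [id_eq, mul_one] at h
      exact h
    have this : HasDerivAt (fun s => x5 s * Real.exp (u * s))
        ((-(Ee t) * (θ * x2 + ε * x3 + x4) - u * x5 t) * Real.exp (u * t)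
          + x5 t * (Real.exp (u * t) * u)) t := hd1.mul hd2
    convert this using 1
    rw [hEe, hM]
    ring
  have key := intervalIntegral.integral_eq_sub_of_hasDerivAt hderiv (hint.const_mul _)
  rw [intervalIntegral.integral_const_mul] at key
  have key2 : x5 τ * Real.exp (u * τ)
      = x5 0 - (x2 * K * βbar / N0) * ∫ h in (0:ℝ)..τ, βr0 h * r0 h * Real.exp (u * h) := by
    have : Real.exp (u * 0) = 1 := by norm_num
    rw [this] at key
    linarith [key]
  have hee : Real.exp (u * τ) * Real.exp (-u * τ) = 1 := by
    rw [← Real.exp_add]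
    norm_num
  have hx5τ : x5 τ = x5 τ * Real.exp (u * τ) * Real.exp (-u * τ) := by
    rw [mul_assoc, hee, mul_one]
  rw [hxh5, hx5τ, key2, hx50]
  ring
end

section
/- Suppose R₀ ≠ 1. Then the only solution (x₁,x₂,x₃,x₄,x₅) of the linearized system at the disease-free equilibrium is the trivial one: x₁ = x₂ = x₃ = x₄ = 0 and x₅(τ) = 0 for all τ ≥ 0. Combined with the nontriviality of the kernel at R₀ = 1, this shows that zero is an eigenvalue of the linearization if and only if R₀ = 1. -/
open MeasureTheory Real Set Filter

/-- if `R₀ ≠ 1`, the only solution of the linearized system (i)–(vi) at the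
disease-free equilibrium is the trivial one: `x₁ = x₂ = x₃ = x₄ = 0` and `x₅(τ) = 0`
for all `τ ≥ 0`; hence zero is an eigenvalue of the linearization iff `R₀ = 1`. -/
theorem stmt8
    (Λ u μ σ γA γI α βs ρ θ ε βbar : ℝ)
    (hΛ : 0 < Λ) (hu : 0 < u) (hμ : 0 < μ) (hσ : 0 < σ)
    (hγA : 0 < γA) (hγI : 0 < γI) (hα : 0 < α) (hβs : 0 < βs)
    (hρ0 : 0 < ρ) (hρ1 : ρ < 1) (hθ0 : 0 < θ) (hθ1 : θ ≤ 1)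
    (hε0 : 0 < ε) (hε1 : ε ≤ 1) (hβbar : 0 < βbar)
    (βr0 : ℝ → ℝ) (hmeas : Measurable βr0)
    (hβr0 : ∀ τ, 0 ≤ τ → 0 < βr0 τ ∧ βr0 τ ≤ 1)
    (S0 : ℝ) (hS0 : S0 = Λ / (α + u))
    (r0 : ℝ → ℝ) (hr0 : ∀ τ, r0 τ = α * Λ / (α + u) * Real.exp (-u * τ))
    (N0 : ℝ) (hN0 : N0 = S0 + ∫ τ in Set.Ioi (0:ℝ), r0 τ)
    (K : ℝ) (hK : K = θ + (1 - ρ) * σ * ε / (γA + u) + ρ * σ / (γI + μ + u))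
    (R0 : ℝ)
    (hR0def : R0 = (βs * S0 + βbar * ∫ τ in Set.Ioi (0:ℝ), βr0 τ * r0 τ) * K / ((σ + u) * N0))
    (B : ℝ) (hB : B = (βs * S0 + βbar * ∫ τ in Set.Ioi (0:ℝ), βr0 τ * r0 τ) / N0)
    (D : ℝ) (hD : D = βs * S0 / N0)
    (Ee : ℝ → ℝ) (hEe : ∀ τ, Ee τ = βbar * βr0 τ * r0 τ / N0)
    -- an arbitrary solution of the linearized system (i)--(vi)
    (x1 x2 x3 x4 : ℝ) (x5 : ℝ → ℝ)
    (h1 : -(α + u) * x1 - D * (θ * x2 + ε * x3 + x4) = 0)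
    (h2 : B * (θ * x2 + ε * x3 + x4) - (σ + u) * x2 = 0)
    (h3 : (1 - ρ) * σ * x2 - (γA + u) * x3 = 0)
    (h4 : ρ * σ * x2 - (γI + μ + u) * x4 = 0)
    (h5 : ∀ τ, 0 ≤ τ →
      HasDerivAt x5 (-(Ee τ) * (θ * x2 + ε * x3 + x4) - u * x5 τ) τ)
    (h6 : x5 0 = α * x1 + γA * x3 + γI * x4)
    (hR0 : R0 ≠ 1) :
    x1 = 0 ∧ x2 = 0 ∧ x3 = 0 ∧ x4 = 0 ∧ ∀ τ, 0 ≤ τ → x5 τ = 0 := by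
  -- key positivity facts
  have hσu : (0:ℝ) < σ + u := by linarith
  have hγAu : (0:ℝ) < γA + u := by linarith
  have hγIu : (0:ℝ) < γI + μ + u := by linarith
  have hαu : (0:ℝ) < α + u := by linarith
  -- x3, x4 in terms of x2
  have hx3 : x3 = (1 - ρ) * σ * x2 / (γA + u) := by
    field_simp
    linarith [h3]
  have hx4 : x4 = ρ * σ * x2 / (γI + μ + u) := by
    field_simp
    linarith [h4]
  -- θx2 + εx3 + x4 = K * x2
  have hsum : θ * x2 + ε * x3 + x4 = K * x2 := by
    rw [hx3, hx4, hK]; field_simp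
  -- N0 positive
  have hN0pos : 0 < N0 := by
    have hint : 0 ≤ ∫ τ in Set.Ioi (0:ℝ), r0 τ := by
      apply MeasureTheory.setIntegral_nonneg measurableSet_Ioi
      intro τ _
      rw [hr0]
      positivity
    have hS0pos : 0 < S0 := by rw [hS0]; positivity
    rw [hN0]; linarith
  -- R0 * (σ+u) = B * K
  have hR0BK : R0 * (σ + u) = B * K := by
    rw [hR0def, hB]
    field_simp
  have hx2 : x2 = 0 := by
    rw [hsum] at h2
    have : (B * K - (σ + u)) * x2 = 0 := by linarith
    rcases mul_eq_zero.1 this with h | h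
    · exfalso
      apply hR0
      have : R0 * (σ + u) = 1 * (σ + u) := by rw [hR0BK]; linarith
      exact mul_right_cancel₀ (ne_of_gt hσu) this
    · exact h
  have hx3' : x3 = 0 := by rw [hx3, hx2]; ring
  have hx4' : x4 = 0 := by rw [hx4, hx2]; ring
  have hx1 : x1 = 0 := by
    rw [hx2, hx3', hx4'] at h1
    have : -(α + u) * x1 = 0 := by linarith
    rcases mul_eq_zero.1 this with h | h
    · exfalso; have : -(α + u) < 0 := by linarith
      exact this.ne h
    · exact h
  refine ⟨hx1, hx2, hx3', hx4', ?_⟩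
  -- x5: derivative is -u * x5, initial value 0
  have hx50 : x5 0 = 0 := by rw [h6, hx1, hx3', hx4']; ring
  have h5' : ∀ τ, 0 ≤ τ → HasDerivAt x5 (-u * x5 τ) τ := by
    intro τ hτ
    have := h5 τ hτ
    rw [hx2, hx3', hx4'] at this
    simpa using this
  intro b hb
  set g : ℝ → ℝ := fun τ => x5 τ * Real.exp (u * τ) with hg
  have hgd : ∀ τ : ℝ, 0 ≤ τ → HasDerivAt g 0 τ := by
    intro τ hτ
    have hlin : HasDerivAt (fun t : ℝ => u * t) u τ := by
      simpa using (hasDerivAt_id τ).const_mul u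
    have he : HasDerivAt (fun t : ℝ => Real.exp (u * t)) (Real.exp (u * τ) * u) τ := hlin.exp
    have h1' := (h5' τ hτ).mul he
    have h2' : HasDerivAt g (-u * x5 τ * Real.exp (u * τ) + x5 τ * (Real.exp (u * τ) * u)) τ := h1'
    convert h2' using 1
    ring
  have hgderiv : ∀ τ ∈ Ico (0:ℝ) b, HasDerivWithinAt g 0 (Ici τ) τ :=
    fun τ hτ => (hgd τ hτ.1).hasDerivWithinAt
  have hgcont : ContinuousOn g (Icc 0 b) := fun τ hτ =>
    (hgd τ hτ.1).continuousAt.continuousWithinAt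
  have := constant_of_has_deriv_right_zero hgcont hgderiv b (right_mem_Icc.2 hb)
  have hgb : g b = 0 := by
    rw [this]
    simp [hg, hx50]
  have hexp : Real.exp (u * b) ≠ 0 := (Real.exp_pos _).ne'
  have : x5 b * Real.exp (u * b) = 0 := hgb
  exact (mul_eq_zero.1 this).resolve_right hexp
end

section
/- The vector ξ̂ = (0, 1, εB/(γ_A+u), B/(γ_I+μ+u), 0) (with fifth component the zero function) solves the adjoint linearized system if and only if R₀ = 1; equivalently, equation (II) evaluated at ξ̂ reduces to B·K − (σ+u) = 0, which holds if and only if R₀ = 1, while equations (I), (III), (IV), (V), (VI) hold at ξ̂ unconditionally. -/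
open MeasureTheory Real Set Filter

/-- `ξ̂ = (0, 1, εB/(γ_A+u), B/(γ_I+μ+u), 0)` solves the adjoint linearized
system iff `R₀ = 1`: equations (I), (III), (IV), (V), (VI) hold at `ξ̂` unconditionally,
and equation (II) at `ξ̂` reduces to `B·K − (σ+u) = 0`, which holds iff `R₀ = 1`. -/
theorem stmt9
    (Λ u μ σ γA γI α βs ρ θ ε βbar : ℝ)
    (hΛ : 0 < Λ) (hu : 0 < u) (hμ : 0 < μ) (hσ : 0 < σ)
    (hγA : 0 < γA) (hγI : 0 < γI) (hα : 0 < α) (hβs : 0 < βs)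
    (hρ0 : 0 < ρ) (hρ1 : ρ < 1) (hθ0 : 0 < θ) (hθ1 : θ ≤ 1)
    (hε0 : 0 < ε) (hε1 : ε ≤ 1) (hβbar : 0 < βbar)
    (βr0 : ℝ → ℝ) (hmeas : Measurable βr0)
    (hβr0 : ∀ τ, 0 ≤ τ → 0 < βr0 τ ∧ βr0 τ ≤ 1)
    (S0 : ℝ) (hS0 : S0 = Λ / (α + u))
    (r0 : ℝ → ℝ) (hr0 : ∀ τ, r0 τ = α * Λ / (α + u) * Real.exp (-u * τ))
    (N0 : ℝ) (hN0 : N0 = S0 + ∫ τ in Set.Ioi (0:ℝ), r0 τ)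
    (K : ℝ) (hK : K = θ + (1 - ρ) * σ * ε / (γA + u) + ρ * σ / (γI + μ + u))
    (R0 : ℝ)
    (hR0def : R0 = (βs * S0 + βbar * ∫ τ in Set.Ioi (0:ℝ), βr0 τ * r0 τ) * K / ((σ + u) * N0))
    (B : ℝ) (hB : B = (βs * S0 + βbar * ∫ τ in Set.Ioi (0:ℝ), βr0 τ * r0 τ) / N0)
    (D : ℝ) (hD : D = βs * S0 / N0)
    (Ee : ℝ → ℝ) (hEe : ∀ τ, Ee τ = βbar * βr0 τ * r0 τ / N0)
    -- the components of the adjoint kernel vector ξ̂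
    (ξ1 ξ2 : ℝ) (hξ1 : ξ1 = 0) (hξ2 : ξ2 = 1)
    (ξ3 : ℝ) (hξ3 : ξ3 = ε * B / (γA + u))
    (ξ4 : ℝ) (hξ4 : ξ4 = B / (γI + μ + u))
    (ξ5 : ℝ → ℝ) (hξ5 : ∀ τ, ξ5 τ = 0) :
    -- (I)
    (-(α + u) * ξ1 = 0) ∧
    -- (III)
    (-ε * D * ξ1 + ε * B * ξ2 - (γA + u) * ξ3
      - ε * (∫ τ in Set.Ioi (0:ℝ), Ee τ * ξ5 τ) = 0) ∧
    -- (IV)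
    (-D * ξ1 + B * ξ2 - (γI + μ + u) * ξ4
      - (∫ τ in Set.Ioi (0:ℝ), Ee τ * ξ5 τ) = 0) ∧
    -- (V)
    (∀ τ, 0 ≤ τ → HasDerivAt ξ5 (u * ξ5 τ) τ) ∧
    -- (VI)
    (ξ5 0 = 0) ∧
    -- (II) holds iff R₀ = 1
    ((-θ * D * ξ1 + (θ * B - (σ + u)) * ξ2 + (1 - ρ) * σ * ξ3 + ρ * σ * ξ4
      - θ * (∫ τ in Set.Ioi (0:ℝ), Ee τ * ξ5 τ) = 0) ↔ R0 = 1) ∧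
    -- the reduction of (II) to B·K − (σ+u) = 0, which holds iff R₀ = 1
    (B * K - (σ + u) = 0 ↔ R0 = 1) := by
  have hN0pos : 0 < N0 := by
    rw [hN0, hS0]
    have h1 : 0 < Λ / (α + u) := by positivity
    have h2 : 0 ≤ ∫ τ in Set.Ioi (0:ℝ), r0 τ := by
      apply integral_nonneg
      intro τ; rw [hr0]; positivity
    linarith
  have hint : (∫ τ in Set.Ioi (0:ℝ), Ee τ * ξ5 τ) = 0 := by
    simp [hξ5]
  have hBK : R0 = B * K / (σ + u) := by
    rw [hR0def, hB, div_mul_eq_mul_div, div_div, mul_comm (σ + u) N0]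
  have hiff : B * K - (σ + u) = 0 ↔ R0 = 1 := by
    rw [hBK, div_eq_one_iff_eq (by positivity : σ + u ≠ 0)]
    constructor <;> intro h <;> linarith
  have key : -θ * D * ξ1 + (θ * B - (σ + u)) * ξ2 + (1 - ρ) * σ * ξ3 + ρ * σ * ξ4
      - θ * (∫ τ in Set.Ioi (0:ℝ), Ee τ * ξ5 τ) = B * K - (σ + u) := by
    rw [hξ1, hξ2, hξ3, hξ4, hint, hK]
    field_simp
    ring
  refine ⟨by rw [hξ1]; ring, ?_, ?_, ?_, hξ5 0, by rw [key]; exact hiff, hiff⟩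
  · rw [hint, hξ1, hξ2, hξ3]
    field_simp
    ring
  · rw [hint, hξ1, hξ2, hξ4]
    field_simp
    ring
  · intro τ _
    have h5 : ξ5 = fun _ => (0:ℝ) := funext hξ5
    rw [h5]
    simpa using hasDerivAt_const τ (0:ℝ)
end

section
/- Every solution (ξ₁,ξ₂,ξ₃,ξ₄,ξ₅) of the adjoint linearized system satisfies ξ₅(τ) = 0 for all τ ≥ 0, ξ₁ = 0, ξ₃ = ξ₂·εB/(γ_A+u), and ξ₄ = ξ₂·B/(γ_I+μ+u); moreover, if R₀ ≠ 1 then additionally ξ₂ = 0, so the solution is trivial. Hence at R₀ = 1 the kernel of the adjoint linearization is one-dimensional, spanned by ξ̂ = (0, 1, εB/(γ_A+u), B/(γ_I+μ+u), 0). -/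
open MeasureTheory Real Set Filter

/-- every solution `(ξ₁,…,ξ₅)` of the adjoint linearized system satisfies
`ξ₅ ≡ 0` on `[0,∞)`, `ξ₁ = 0`, `ξ₃ = ξ₂·εB/(γ_A+u)`, `ξ₄ = ξ₂·B/(γ_I+μ+u)`; and if
`R₀ ≠ 1` then also `ξ₂ = 0`. Hence at `R₀ = 1` the adjoint kernel is one-dimensional,
spanned by `ξ̂ = (0, 1, εB/(γ_A+u), B/(γ_I+μ+u), 0)`. -/
theorem stmt10
    (Λ u μ σ γA γI α βs ρ θ ε βbar : ℝ)
    (hΛ : 0 < Λ) (hu : 0 < u) (hμ : 0 < μ) (hσ : 0 < σ)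
    (hγA : 0 < γA) (hγI : 0 < γI) (hα : 0 < α) (hβs : 0 < βs)
    (hρ0 : 0 < ρ) (hρ1 : ρ < 1) (hθ0 : 0 < θ) (hθ1 : θ ≤ 1)
    (hε0 : 0 < ε) (hε1 : ε ≤ 1) (hβbar : 0 < βbar)
    (βr0 : ℝ → ℝ) (hmeas : Measurable βr0)
    (hβr0 : ∀ τ, 0 ≤ τ → 0 < βr0 τ ∧ βr0 τ ≤ 1)
    (S0 : ℝ) (hS0 : S0 = Λ / (α + u))
    (r0 : ℝ → ℝ) (hr0 : ∀ τ, r0 τ = α * Λ / (α + u) * Real.exp (-u * τ))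
    (N0 : ℝ) (hN0 : N0 = S0 + ∫ τ in Set.Ioi (0:ℝ), r0 τ)
    (K : ℝ) (hK : K = θ + (1 - ρ) * σ * ε / (γA + u) + ρ * σ / (γI + μ + u))
    (R0 : ℝ)
    (hR0def : R0 = (βs * S0 + βbar * ∫ τ in Set.Ioi (0:ℝ), βr0 τ * r0 τ) * K / ((σ + u) * N0))
    (B : ℝ) (hB : B = (βs * S0 + βbar * ∫ τ in Set.Ioi (0:ℝ), βr0 τ * r0 τ) / N0)
    (D : ℝ) (hD : D = βs * S0 / N0)
    (Ee : ℝ → ℝ) (hEe : ∀ τ, Ee τ = βbar * βr0 τ * r0 τ / N0)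
    -- an arbitrary solution of the adjoint linearized system (I)--(VI)
    (ξ1 ξ2 ξ3 ξ4 : ℝ) (ξ5 : ℝ → ℝ)
    (hI : -(α + u) * ξ1 = 0)
    (hII : -θ * D * ξ1 + (θ * B - (σ + u)) * ξ2 + (1 - ρ) * σ * ξ3 + ρ * σ * ξ4
      - θ * (∫ τ in Set.Ioi (0:ℝ), Ee τ * ξ5 τ) = 0)
    (hIII : -ε * D * ξ1 + ε * B * ξ2 - (γA + u) * ξ3
      - ε * (∫ τ in Set.Ioi (0:ℝ), Ee τ * ξ5 τ) = 0)
    (hIV : -D * ξ1 + B * ξ2 - (γI + μ + u) * ξ4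
      - (∫ τ in Set.Ioi (0:ℝ), Ee τ * ξ5 τ) = 0)
    (hV : ∀ τ, 0 ≤ τ → HasDerivAt ξ5 (u * ξ5 τ) τ)
    (hVI : ξ5 0 = 0) :
    (∀ τ, 0 ≤ τ → ξ5 τ = 0) ∧
    ξ1 = 0 ∧
    ξ3 = ξ2 * (ε * B / (γA + u)) ∧
    ξ4 = ξ2 * (B / (γI + μ + u)) ∧
    (R0 ≠ 1 → ξ2 = 0) := by

  have hξ5 : ∀ τ, 0 ≤ τ → ξ5 τ = 0 := by
    intro τ hτ
    set g : ℝ → ℝ := fun t => ξ5 t * Real.exp (-(u * t)) with hg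
    have hder : ∀ t ∈ Set.Ico (0:ℝ) τ, HasDerivWithinAt g 0 (Set.Ici t) t := by
      intro t ht
      have h1 : HasDerivAt (fun s => Real.exp (-(u * s)))
          (Real.exp (-(u * t)) * (-u)) t := by
        have : HasDerivAt (fun s : ℝ => -(u * s)) (-u) t := by
          exact ((hasDerivAt_id t).const_mul u).neg.congr_deriv (by ring)
        simpa using this.exp
      have h2 := (hV t ht.1).mul h1
      have h3 : HasDerivAt g 0 t := by
        exact h2.congr_deriv (by ring)
      exact h3.hasDerivWithinAt
    have hcont : ContinuousOn g (Set.Icc 0 τ) := by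
      intro t ht
      have h1 : HasDerivAt (fun s => Real.exp (-(u * s)))
          (Real.exp (-(u * t)) * (-u)) t := by
        have : HasDerivAt (fun s : ℝ => -(u * s)) (-u) t := by
          exact ((hasDerivAt_id t).const_mul u).neg.congr_deriv (by ring)
        simpa using this.exp
      exact (((hV t ht.1).continuousAt).mul h1.continuousAt).continuousWithinAt
    have := constant_of_has_deriv_right_zero hcont hder τ (by
      exact ⟨hτ, le_refl τ⟩)
    have hg0 : g 0 = 0 := by simp [hg, hVI]
    have : g τ = 0 := by rw [this, hg0]
    have hexp : Real.exp (-(u * τ)) ≠ 0 := Real.exp_ne_zero _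
    have := this
    simp only [hg] at this
    exact (mul_eq_zero.1 this).resolve_right hexp
  have hC : (∫ τ in Set.Ioi (0:ℝ), Ee τ * ξ5 τ) = 0 := by
    have : ∀ τ ∈ Set.Ioi (0:ℝ), Ee τ * ξ5 τ = 0 := by
      intro τ hτ
      rw [hξ5 τ (le_of_lt hτ), mul_zero]
    rw [setIntegral_congr_fun measurableSet_Ioi this]
    simp
  have hξ1 : ξ1 = 0 := by
    have h : -(α + u) ≠ 0 := by
      have : (0:ℝ) < α + u := by linarith
      intro h'; rw [neg_eq_zero] at h'; linarith
    exact (mul_eq_zero.1 hI).resolve_left h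
  rw [hC, hξ1] at hII hIII hIV
  have hγAu : γA + u ≠ 0 := by positivity
  have hγIu : γI + μ + u ≠ 0 := by positivity
  have hξ3 : ξ3 = ξ2 * (ε * B / (γA + u)) := by
    field_simp
    linarith [hIII]
  have hξ4 : ξ4 = ξ2 * (B / (γI + μ + u)) := by
    field_simp
    linarith [hIV]
  refine ⟨hξ5, hξ1, hξ3, hξ4, ?_⟩
  intro hR0
  have hσu : (0:ℝ) < σ + u := by linarith
  have hR0' : R0 = B * K / (σ + u) := by
    rw [hR0def, hB]
    field_simp
  have hBK : B * K ≠ σ + u := by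
    intro h
    apply hR0
    rw [hR0', h]
    field_simp
  -- from hII: ξ2 * (B*K - (σ+u)) = 0
  have key : ξ2 * (B * K - (σ + u)) = 0 := by
    rw [hξ3] at hII
    rw [hξ4] at hII
    rw [hK]
    field_simp at hII ⊢
    ring_nf at hII ⊢
    linarith [hII]
  have : B * K - (σ + u) ≠ 0 := sub_ne_zero.2 hBK
  exact (mul_eq_zero.1 key).resolve_right this
end

section
/- The kernel function x̂₅ satisfies the closed-form integral identity ∫₀^∞ x̂₅(τ) dτ = x̂₅(0)/u − (β̄·K/(u·N⁰))·∫₀^∞ β_{r0}(h)·r⁰(h) dh. -/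
open MeasureTheory Real Set Filter

open Topology

private 
lemma exp_int (u a : ℝ) (hu : 0 < u) :
    ∫ τ in Ioi a, Real.exp (-u * τ) = Real.exp (-u * a) / u := by
  have hderiv : ∀ x ∈ Ici a, HasDerivAt (fun τ => -Real.exp (-u * τ) / u)
      (Real.exp (-u * x)) x := by
    intro x _
    have h : HasDerivAt (fun τ : ℝ => -u * τ) (-u) x := by
      simpa using (hasDerivAt_id x).const_mul (-u)
    have h2 := (h.exp.neg).div_const u
    convert h2 using 1
    · rfl
    · rfl
    · rfl
    field_simp
  have htend : Tendsto (fun τ : ℝ => -Real.exp (-u * τ) / u) atTop (𝓝 0) := by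
    have h1 : Tendsto (fun τ : ℝ => u * τ) atTop atTop :=
      Tendsto.const_mul_atTop hu tendsto_id
    have h2 : Tendsto (fun τ : ℝ => Real.exp (-u * τ)) atTop (𝓝 0) :=
      Tendsto.congr (fun τ => by simp [Function.comp, neg_mul])
        (Real.tendsto_exp_neg_atTop_nhds_zero.comp h1)
    have := (h2.neg).div_const u
    simpa using this
  have := integral_Ioi_of_hasDerivAt_of_tendsto' hderiv (exp_neg_integrableOn_Ioi a hu) htend
  rw [this]
  ring

private lemma key_swap (u M : ℝ) (hu : 0 < u) (b : ℝ → ℝ) (hb : Measurable b)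
    (h0 : ∀ h, 0 ≤ b h) (h1 : ∀ h, b h ≤ M) :
    IntegrableOn (fun τ => (∫ h in (0:ℝ)..τ, b h) * Real.exp (-u * τ)) (Ioi 0) ∧
    (∫ τ in Ioi (0:ℝ), (∫ h in (0:ℝ)..τ, b h) * Real.exp (-u * τ))
      = (1/u) * ∫ h in Ioi (0:ℝ), b h * Real.exp (-u * h) := by
  have hM : 0 ≤ M := (h0 0).trans (h1 0)
  set μ := volume.restrict (Ioi (0:ℝ)) with hμ
  set F : ℝ → ℝ → ℝ := fun τ h => Set.indicator (Iic τ) b h * Real.exp (-u * τ) with hF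
  -- measurability
  have hFm : Measurable (Function.uncurry F) := by
    have : Function.uncurry F = fun p : ℝ × ℝ =>
        (if p.2 ≤ p.1 then b p.2 else 0) * Real.exp (-u * p.1) := by
      ext p; simp [Function.uncurry, F, Set.indicator_apply]
    rw [this]
    exact (Measurable.ite (measurableSet_le measurable_snd measurable_fst)
      (hb.comp measurable_snd) measurable_const).mul ((measurable_fst.const_mul (-u)).exp)
  -- sections integrable
  have hsec : ∀ τ : ℝ, Integrable (fun h => F τ h) μ := by
    intro τ
    have hind : Integrable (fun h => Set.indicator (Iic τ) b h) μ := by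
      rw [hμ, integrable_indicator_iff measurableSet_Iic]
      rw [IntegrableOn, Measure.restrict_restrict measurableSet_Iic]
      have hset : Iic τ ∩ Ioi 0 = Ioc 0 τ := by ext x; simp [mem_Ioc]; tauto
      rw [hset]
      apply Measure.integrableOn_of_bounded (M := M) measure_Ioc_lt_top.ne
        hb.aestronglyMeasurable
      filter_upwards with x
      rw [Real.norm_eq_abs, abs_of_nonneg (h0 x)]; exact h1 x
    exact hind.mul_const _
  -- bound for norm integrals
  have hnorm : ∀ τ ∈ Ioi (0:ℝ), (∫ h, ‖F τ h‖ ∂μ) ≤ M * τ * Real.exp (-u * τ) := by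
    intro τ hτ
    have heq : ∀ h, ‖F τ h‖ = Set.indicator (Iic τ) (fun x => ‖b x‖) h * Real.exp (-u * τ) := by
      intro h
      rw [hF]
      simp only [norm_mul, Real.norm_eq_abs, abs_of_pos (Real.exp_pos _)]
      rw [← Real.norm_eq_abs, norm_indicator_eq_indicator_norm]
      simp [Real.norm_eq_abs]
    simp only [heq]
    rw [integral_mul_const, hμ, setIntegral_indicator measurableSet_Iic]
    have hset : Ioi (0:ℝ) ∩ Iic τ = Ioc 0 τ := Ioi_inter_Iic
    rw [hset]
    have hbd : (∫ h in Ioc (0:ℝ) τ, ‖b h‖) ≤ M * τ := by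
      have := norm_setIntegral_le_of_norm_le_const (μ := volume) (s := Ioc (0:ℝ) τ)
        (f := fun h => ‖b h‖) (C := M) measure_Ioc_lt_top
        (fun x _ => by rw [norm_norm, Real.norm_eq_abs, abs_of_nonneg (h0 x)]; exact h1 x)
      calc (∫ h in Ioc (0:ℝ) τ, ‖b h‖) ≤ ‖∫ h in Ioc (0:ℝ) τ, ‖b h‖‖ := le_abs_self _
        _ ≤ M * (volume (Ioc (0:ℝ) τ)).toReal := this
        _ = M * τ := by rw [Real.volume_Ioc, ENNReal.toReal_ofReal (by linarith [mem_Ioi.mp hτ])]; ring_nf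
    have := Real.exp_pos (-u * τ)
    nlinarith [this.le]
  -- integrability of the norm-integral function
  have hintnorm : Integrable (fun τ => ∫ h, ‖F τ h‖ ∂μ) μ := by
    apply Integrable.mono' (g := fun τ => (M * (2/u)) * Real.exp (-(u/2) * τ))
    · exact ((exp_neg_integrableOn_Ioi 0 (by linarith : (0:ℝ) < u/2)).const_mul _)
    · exact (hFm.norm.aestronglyMeasurable.integral_prod_right')
    · rw [hμ, ae_restrict_iff' measurableSet_Ioi]
      filter_upwards with τ hτ
      have h2 : (0:ℝ) ≤ ∫ h, ‖F τ h‖ ∂μ := integral_nonneg fun h => norm_nonneg _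
      rw [Real.norm_eq_abs, abs_of_nonneg h2]
      have h3 := hnorm τ hτ
      -- M * τ * exp (-u * τ) ≤ M * (2/u) * exp (-(u/2) * τ)
      have hτ0 : (0:ℝ) < τ := hτ
      have key : τ * Real.exp (-u * τ) ≤ (2/u) * Real.exp (-(u/2) * τ) := by
        have e1 : Real.exp (-u * τ) = Real.exp (-(u/2) * τ) * Real.exp (-(u/2) * τ) := by
          rw [← Real.exp_add]; congr 1; ring
        have e2 : (u/2) * τ ≤ Real.exp ((u/2) * τ) := by
          linarith [Real.add_one_le_exp ((u/2) * τ)]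
        have e3 : Real.exp ((u/2) * τ) * Real.exp (-(u/2) * τ) = 1 := by
          rw [← Real.exp_add]
          have harg : (u/2) * τ + -(u/2) * τ = 0 := by ring
          rw [harg, Real.exp_zero]
        have e4 : (0:ℝ) < Real.exp (-(u/2) * τ) := Real.exp_pos _
        have e5 : τ * Real.exp (-(u/2) * τ) ≤ 2/u := by
          have h6 : τ ≤ (2/u) * Real.exp ((u/2) * τ) := by
            have h7 : (2/u) * ((u/2) * τ) = τ := by field_simp
            have h8 := mul_le_mul_of_nonneg_left e2 (by positivity : (0:ℝ) ≤ 2/u)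
            linarith
          calc τ * Real.exp (-(u/2) * τ) ≤ ((2/u) * Real.exp ((u/2) * τ)) * Real.exp (-(u/2) * τ) :=
                mul_le_mul_of_nonneg_right h6 e4.le
            _ = 2/u := by rw [mul_assoc, e3, mul_one]
        calc τ * Real.exp (-u * τ) = (τ * Real.exp (-(u/2) * τ)) * Real.exp (-(u/2) * τ) := by
              rw [e1]; ring
          _ ≤ (2/u) * Real.exp (-(u/2) * τ) := mul_le_mul_of_nonneg_right e5 e4.le
      calc (∫ h, ‖F τ h‖ ∂μ) ≤ M * τ * Real.exp (-u * τ) := h3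
        _ = M * (τ * Real.exp (-u * τ)) := by ring
        _ ≤ M * ((2/u) * Real.exp (-(u/2) * τ)) := mul_le_mul_of_nonneg_left key hM
        _ = M * (2/u) * Real.exp (-(u/2) * τ) := by ring
  have hFint : Integrable (Function.uncurry F) (μ.prod μ) := by
    rw [integrable_prod_iff hFm.aestronglyMeasurable]
    exact ⟨Eventually.of_forall hsec, hintnorm⟩
  -- pointwise identification of inner integral (τ side)
  have hinner : ∀ τ ∈ Ioi (0:ℝ),
      (∫ h, F τ h ∂μ) = (∫ h in (0:ℝ)..τ, b h) * Real.exp (-u * τ) := by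
    intro τ hτ
    rw [hF]
    simp only
    rw [integral_mul_const, hμ, setIntegral_indicator measurableSet_Iic, Ioi_inter_Iic,
      intervalIntegral.integral_of_le (le_of_lt hτ)]
  constructor
  · exact (hFint.integral_prod_left).congr
      ((ae_restrict_iff' measurableSet_Ioi).2 (Eventually.of_forall fun τ hτ => hinner τ hτ))
  · have hswap := integral_integral_swap hFint
    have lhs_eq : (∫ τ, ∫ h, F τ h ∂μ ∂μ)
        = ∫ τ in Ioi (0:ℝ), (∫ h in (0:ℝ)..τ, b h) * Real.exp (-u * τ) := by
      rw [hμ]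
      exact setIntegral_congr_fun measurableSet_Ioi fun τ hτ => hinner τ hτ
    have rhs_eq : (∫ h, ∫ τ, F τ h ∂μ ∂μ)
        = (1/u) * ∫ h in Ioi (0:ℝ), b h * Real.exp (-u * h) := by
      have hpt : ∀ h ∈ Ioi (0:ℝ), (∫ τ, F τ h ∂μ)
          = (1/u) * (b h * Real.exp (-u * h)) := by
        intro h hh
        have hfun : (fun τ => F τ h)
            = Set.indicator (Ici h) (fun τ => b h * Real.exp (-u * τ)) := by
          funext τ
          rw [hF]
          simp only [Set.indicator_apply, mem_Iic, mem_Ici]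
          by_cases hc : h ≤ τ <;> simp [hc]
        rw [hfun, hμ, setIntegral_indicator measurableSet_Ici]
        have hset : Ioi (0:ℝ) ∩ Ici h = Ici h :=
          inter_eq_self_of_subset_right (fun x hx => mem_Ioi.mpr (lt_of_lt_of_le (mem_Ioi.mp hh) (mem_Ici.mp hx)))
        rw [hset, integral_const_mul _ _, MeasureTheory.integral_Ici_eq_integral_Ioi,
          exp_int u h hu]
        ring
      rw [hμ]
      rw [setIntegral_congr_fun measurableSet_Ioi fun h hh => hpt h hh]
      rw [integral_const_mul]
    rw [← lhs_eq, hswap, rhs_eq]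

/-- the kernel function `x̂₅` satisfies the closed-form integral identity
`∫₀^∞ x̂₅(τ) dτ = x̂₅(0)/u − (β̄·K/(u·N⁰))·∫₀^∞ β_{r0}(h)·r⁰(h) dh`. -/
theorem stmt13
    (Λ u μ σ γA γI α βs ρ θ ε βbar : ℝ)
    (hΛ : 0 < Λ) (hu : 0 < u) (hμ : 0 < μ) (hσ : 0 < σ)
    (hγA : 0 < γA) (hγI : 0 < γI) (hα : 0 < α) (hβs : 0 < βs)
    (hρ0 : 0 < ρ) (hρ1 : ρ < 1) (hθ0 : 0 < θ) (hθ1 : θ ≤ 1)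
    (hε0 : 0 < ε) (hε1 : ε ≤ 1) (hβbar : 0 < βbar)
    (βr0 : ℝ → ℝ) (hmeas : Measurable βr0)
    (hβr0 : ∀ τ, 0 ≤ τ → 0 < βr0 τ ∧ βr0 τ ≤ 1)
    (S0 : ℝ) (hS0 : S0 = Λ / (α + u))
    (r0 : ℝ → ℝ) (hr0 : ∀ τ, r0 τ = α * Λ / (α + u) * Real.exp (-u * τ))
    (N0 : ℝ) (hN0 : N0 = S0 + ∫ τ in Set.Ioi (0:ℝ), r0 τ)
    (K : ℝ) (hK : K = θ + (1 - ρ) * σ * ε / (γA + u) + ρ * σ / (γI + μ + u))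
    (x1 : ℝ) (hx1 : x1 = -(βs * S0 * K) / ((α + u) * N0))
    (x3 : ℝ) (hx3 : x3 = (1 - ρ) * σ / (γA + u))
    (x4 : ℝ) (hx4 : x4 = ρ * σ / (γI + μ + u))
    (x50 : ℝ) (hx50 : x50 = α * x1 + γA * x3 + γI * x4)
    (x5 : ℝ → ℝ)
    (hx5 : ∀ τ, x5 τ =
      (x50 - βbar * K / N0 * ∫ h in (0:ℝ)..τ, βr0 h * r0 h * Real.exp (u * h)) *
        Real.exp (-u * τ)) :
    (∫ τ in Set.Ioi (0:ℝ), x5 τ) =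
      x50 / u - βbar * K / (u * N0) * ∫ h in Set.Ioi (0:ℝ), βr0 h * r0 h := by
  set C : ℝ := α * Λ / (α + u) with hC
  have hC0 : 0 < C := by positivity
  set c : ℝ := βbar * K / N0 with hc
  set b : ℝ → ℝ := fun h => if 0 ≤ h then C * βr0 h else 0 with hb
  have hbm : Measurable b := by
    apply Measurable.ite _ (hmeas.const_mul C) measurable_const
    exact measurableSet_le measurable_const measurable_id
  have hb0 : ∀ h, 0 ≤ b h := by
    intro h
    rw [hb]
    dsimp only
    split_ifs with hh
    · exact mul_nonneg hC0.le (hβr0 h hh).1.le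
    · exact le_refl 0
  have hb1 : ∀ h, b h ≤ C := by
    intro h
    rw [hb]
    dsimp only
    split_ifs with hh
    · calc C * βr0 h ≤ C * 1 := mul_le_mul_of_nonneg_left (hβr0 h hh).2 hC0.le
        _ = C := mul_one C
    · exact hC0.le
  obtain ⟨hint, hval⟩ := key_swap u C hu b hbm hb0 hb1
  -- the interval integrand agrees with b on [0, τ] for τ ≥ 0
  have hGb : ∀ τ : ℝ, 0 ≤ τ →
      (∫ h in (0:ℝ)..τ, βr0 h * r0 h * Real.exp (u * h)) = ∫ h in (0:ℝ)..τ, b h := by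
    intro τ hτ
    apply intervalIntegral.integral_congr
    intro h hh
    rw [Set.uIcc_of_le hτ] at hh
    have hh0 : 0 ≤ h := hh.1
    have hexp : Real.exp (-u * h) * Real.exp (u * h) = 1 := by
      rw [← Real.exp_add]
      have : -u * h + u * h = 0 := by ring
      rw [this, Real.exp_zero]
    show βr0 h * r0 h * Real.exp (u * h) = b h
    rw [hr0 h, hb]
    dsimp only
    rw [if_pos hh0]
    calc βr0 h * (C * Real.exp (-u * h)) * Real.exp (u * h)
        = C * βr0 h * (Real.exp (-u * h) * Real.exp (u * h)) := by ring
      _ = C * βr0 h := by rw [hexp, mul_one]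
  -- rewrite the integrand of the left side
  have hx5' : ∀ τ ∈ Ioi (0:ℝ),
      x5 τ = x50 * Real.exp (-u * τ) - c * ((∫ h in (0:ℝ)..τ, b h) * Real.exp (-u * τ)) := by
    intro τ hτ
    rw [hx5 τ, hGb τ (le_of_lt hτ)]
    ring
  rw [setIntegral_congr_fun measurableSet_Ioi hx5']
  have hint1 : IntegrableOn (fun τ => x50 * Real.exp (-u * τ)) (Ioi (0:ℝ)) :=
    (exp_neg_integrableOn_Ioi 0 hu).const_mul x50
  have hint2 : IntegrableOn
      (fun τ => c * ((∫ h in (0:ℝ)..τ, b h) * Real.exp (-u * τ))) (Ioi (0:ℝ)) :=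
    hint.const_mul c
  rw [integral_sub hint1 hint2]
  rw [integral_const_mul, integral_const_mul, hval, exp_int u 0 hu]
  -- identify the right-hand integral
  have hRI : (∫ h in Ioi (0:ℝ), b h * Real.exp (-u * h))
      = ∫ h in Ioi (0:ℝ), βr0 h * r0 h := by
    apply setIntegral_congr_fun measurableSet_Ioi
    intro h hh
    show b h * Real.exp (-u * h) = βr0 h * r0 h
    rw [hr0 h, hb]
    dsimp only
    rw [if_pos (le_of_lt hh)]
    ring
  rw [hRI]
  rw [hc]
  have hu' : u ≠ 0 := ne_of_gt hu
  norm_num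
  ring
end

section
/- For the parameter values Λ = 20000, θ = 0.55, ε = 0.55, u = 1/(75·365), α = 10⁻⁶, σ = 1/5.2, ρ = 0.4, γ_A = 1/14, γ_I = 1/7, μ = 0.02, β_s = 0.1, and β_{r0}(τ) = 1−η for 0 ≤ τ < τ̂, β_{r0}(τ) = 1 − η·e^{−γ(τ−τ̂)} for τ ≥ τ̂ with τ̂ = 200, η = 0.2, γ = 0.5, the bifurcation coefficient a is strictly positive: a > 0 (so the model undergoes a backward transcritical bifurcation at R₀ = 1). -/
set_option maxHeartbeats 1000000


open MeasureTheory Real Set Filter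

/-- for the paper's parameter values with `β_s = 0.1`, the bifurcation
coefficient satisfies `a > 0`, so the model undergoes a backward transcritical
bifurcation at `R₀ = 1`. -/
theorem stmt17
    (Λ u μ σ γA γI α βs ρ θ ε τh η γ : ℝ)
    (hΛ : Λ = 20000) (hθ : θ = 0.55) (hε : ε = 0.55)
    (hu : u = 1 / (75 * 365)) (hα : α = 1 / 10 ^ 6) (hσ : σ = 1 / 5.2)
    (hρ : ρ = 0.4) (hγA : γA = 1 / 14) (hγI : γI = 1 / 7) (hμ : μ = 0.02)
    (hβs : βs = 0.1) (hτh : τh = 200) (hη : η = 0.2) (hγ : γ = 0.5)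
    (βr0 : ℝ → ℝ)
    (hβr0 : ∀ τ, βr0 τ =
      if τ < τh then 1 - η else 1 - η * Real.exp (-γ * (τ - τh)))
    (S0 : ℝ) (hS0 : S0 = Λ / (α + u))
    (r0 : ℝ → ℝ) (hr0 : ∀ τ, r0 τ = α * Λ / (α + u) * Real.exp (-u * τ))
    (N0 : ℝ) (hN0 : N0 = S0 + ∫ τ in Set.Ioi (0:ℝ), r0 τ)
    (K : ℝ) (hK : K = θ + (1 - ρ) * σ * ε / (γA + u) + ρ * σ / (γI + μ + u))
    (βstar : ℝ)
    (hβstar : βstar =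
      ((σ + u) * N0 / K - βs * S0) / ∫ τ in Set.Ioi (0:ℝ), βr0 τ * r0 τ)
    (a : ℝ)
    (ha : a = 2 * u / Λ * K *
      (βstar * (α * (σ + u) / (α + u) + γA * (1 - ρ) * σ / (γA + u)
          + γI * ρ * σ / (γI + μ + u)) *
        (∫ τ in Set.Ioi (0:ℝ), βr0 τ * Real.exp (-u * τ))
      - u / (α + u) *
        (βs + α * βstar * ∫ τ in Set.Ioi (0:ℝ), βr0 τ * Real.exp (-u * τ)) *
        (1 + (1 - ρ) * σ / u + (γI + u) * ρ * σ / (γI + μ + u))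
      - α * u / (α + u) * βstar ^ 2 * K *
        (∫ τ in Set.Ioi (0:ℝ),
          βr0 τ * Real.exp (-u * τ) * ∫ h in (0:ℝ)..τ, βr0 h))) :
    0 < a := by
  have hu0 : 0 < u := by rw [hu]; norm_num
  have hη0 : 0 ≤ η := by rw [hη]; norm_num
  have hη1 : η ≤ 1 := by rw [hη]; norm_num
  have hγ0 : 0 < γ := by rw [hγ]; norm_num
  -- closed form for βr0 as a continuous function
  have hβ' : ∀ τ : ℝ, βr0 τ = 1 - η * Real.exp (min (-γ * (τ - τh)) 0) := by
    intro τ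
    rw [hβr0 τ]
    split_ifs with h
    · rw [min_eq_right (by
        have h2 : -γ * (τ - τh) = γ * (τh - τ) := by ring
        rw [h2]; exact mul_nonneg hγ0.le (by linarith) : (0:ℝ) ≤ -γ * (τ - τh))]
      simp
    · push_neg at h
      rw [min_eq_left (by
        have h2 : -γ * (τ - τh) = -(γ * (τ - τh)) := by ring
        rw [h2]; exact neg_nonpos.mpr (mul_nonneg hγ0.le (by linarith)) : -γ * (τ - τh) ≤ 0)]
  have hβc : Continuous βr0 := by
    rw [funext hβ']
    exact continuous_const.sub (continuous_const.mul (Real.continuous_exp.comp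
      ((continuous_const.mul (continuous_id.sub continuous_const)).min continuous_const)))
  have hβlo : ∀ τ : ℝ, 1 - η ≤ βr0 τ := by
    intro τ
    rw [hβ' τ]
    have h1 : Real.exp (min (-γ * (τ - τh)) 0) ≤ 1 :=
      Real.exp_le_one_iff.mpr (min_le_right _ _)
    have h2 : η * Real.exp (min (-γ * (τ - τh)) 0) ≤ η := mul_le_of_le_one_right hη0 h1
    linarith
  have hβhi : ∀ τ : ℝ, βr0 τ ≤ 1 := by
    intro τ
    rw [hβ' τ]
    have h2 := mul_nonneg hη0 (Real.exp_pos (min (-γ * (τ - τh)) 0)).le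
    linarith
  have hβ0 : ∀ τ : ℝ, 0 ≤ βr0 τ := fun τ => le_trans (by linarith) (hβlo τ)
  -- exact exponential integrals
  have hexpint : IntegrableOn (fun x : ℝ => Real.exp (-u * x)) (Ioi 0) :=
    exp_neg_integrableOn_Ioi 0 hu0
  have hexpval : (∫ x in Ioi (0:ℝ), Real.exp (-u * x)) = 1 / u := by
    have h := Real.integral_rpow_mul_exp_neg_mul_Ioi (a := 1) one_pos hu0
    simp only [sub_self, Real.rpow_zero, one_mul, Real.rpow_one, Real.Gamma_one, mul_one] at h
    rw [← h]
    exact setIntegral_congr_fun measurableSet_Ioi (fun x _ => by ring_nf)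
  have hΓ2 : Real.Gamma 2 = 1 := by
    rw [show (2:ℝ) = ((1:ℕ):ℝ) + 1 by norm_num, Real.Gamma_nat_eq_factorial]
    norm_num
  have htexpval : (∫ x in Ioi (0:ℝ), x * Real.exp (-u * x)) = 1 / u ^ 2 := by
    have h := Real.integral_rpow_mul_exp_neg_mul_Ioi (a := 2) two_pos hu0
    rw [hΓ2, mul_one] at h
    have h2 : ((1:ℝ) / u) ^ (2:ℝ) = 1 / u ^ 2 := by
      rw [show (2:ℝ) = ((2:ℕ):ℝ) by norm_num, Real.rpow_natCast]
      rw [div_pow, one_pow]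
    rw [h2] at h
    rw [← h]
    refine setIntegral_congr_fun measurableSet_Ioi (fun x hx => ?_)
    rw [show (2:ℝ) - 1 = 1 by norm_num, Real.rpow_one]
    ring_nf
  have htexpint : IntegrableOn (fun x : ℝ => x * Real.exp (-u * x)) (Ioi 0) := by
    have h := integrableOn_rpow_mul_exp_neg_mul_rpow
      (show (-1:ℝ) < 1 by norm_num) (show (0:ℝ) < 1 by norm_num) hu0
    exact h.congr_fun (fun x _ => by simp [Real.rpow_one]) measurableSet_Ioi
  -- integrability of βr0 τ * exp (-u τ)
  have hg1c : Continuous (fun τ : ℝ => βr0 τ * Real.exp (-u * τ)) :=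
    hβc.mul (Real.continuous_exp.comp (continuous_const.mul continuous_id))
  have hg1int : IntegrableOn (fun τ : ℝ => βr0 τ * Real.exp (-u * τ)) (Ioi 0) := by
    refine hexpint.mono' hg1c.aestronglyMeasurable.restrict (ae_of_all _ (fun τ => ?_))
    rw [Real.norm_eq_abs, abs_mul, abs_of_nonneg (hβ0 τ), abs_of_nonneg (Real.exp_pos _).le]
    exact mul_le_of_le_one_left (Real.exp_pos _).le (hβhi τ)
  -- bounds for I1
  have hI1hi : (∫ τ in Ioi (0:ℝ), βr0 τ * Real.exp (-u * τ)) ≤ 1 / u := by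
    rw [← hexpval]
    exact setIntegral_mono_on hg1int hexpint measurableSet_Ioi
      (fun τ _ => mul_le_of_le_one_left (Real.exp_pos _).le (hβhi τ))
  have hI1lo : (1 - η) * (1 / u) ≤ ∫ τ in Ioi (0:ℝ), βr0 τ * Real.exp (-u * τ) := by
    have h := setIntegral_mono_on (hexpint.const_mul (1 - η)) hg1int measurableSet_Ioi
      (fun τ _ => mul_le_mul_of_nonneg_right (hβlo τ) (Real.exp_pos _).le)
    rwa [MeasureTheory.integral_const_mul, hexpval] at h
  -- relating the r0 integrals
  have hIr : (∫ τ in Ioi (0:ℝ), βr0 τ * r0 τ)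
      = α * Λ / (α + u) * ∫ τ in Ioi (0:ℝ), βr0 τ * Real.exp (-u * τ) := by
    rw [← MeasureTheory.integral_const_mul]
    exact setIntegral_congr_fun measurableSet_Ioi (fun τ _ => by rw [hr0]; ring)
  have hr0val : (∫ τ in Ioi (0:ℝ), r0 τ) = α * Λ / (α + u) * (1 / u) := by
    rw [← hexpval, ← MeasureTheory.integral_const_mul]
    exact setIntegral_congr_fun measurableSet_Ioi (fun τ _ => by rw [hr0])
  -- the primitive of βr0
  have hβii : ∀ p q : ℝ, IntervalIntegrable βr0 volume p q := fun p q =>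
    hβc.intervalIntegrable p q
  have hFc : Continuous (fun τ : ℝ => ∫ h in (0:ℝ)..τ, βr0 h) :=
    intervalIntegral.continuous_primitive hβii 0
  have hF0 : ∀ τ : ℝ, 0 ≤ τ → 0 ≤ ∫ h in (0:ℝ)..τ, βr0 h := fun τ hτ =>
    intervalIntegral.integral_nonneg hτ (fun x _ => hβ0 x)
  have hFle : ∀ τ : ℝ, 0 ≤ τ → (∫ h in (0:ℝ)..τ, βr0 h) ≤ τ := by
    intro τ hτ
    calc (∫ h in (0:ℝ)..τ, βr0 h) ≤ ∫ _h in (0:ℝ)..τ, (1:ℝ) :=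
          intervalIntegral.integral_mono_on hτ (hβii 0 τ) intervalIntegrable_const
            (fun x _ => hβhi x)
      _ = τ := by simp
  -- the J integral
  have hg2c : Continuous (fun τ : ℝ => βr0 τ * Real.exp (-u * τ) * ∫ h in (0:ℝ)..τ, βr0 h) :=
    hg1c.mul hFc
  have hg2bound : ∀ τ : ℝ, τ ∈ Ioi (0:ℝ) →
      βr0 τ * Real.exp (-u * τ) * (∫ h in (0:ℝ)..τ, βr0 h) ≤ τ * Real.exp (-u * τ) := by
    intro τ hτ
    have hτ0 : (0:ℝ) ≤ τ := le_of_lt hτ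
    calc βr0 τ * Real.exp (-u * τ) * (∫ h in (0:ℝ)..τ, βr0 h)
        ≤ 1 * Real.exp (-u * τ) * τ := by
          apply mul_le_mul
          · exact mul_le_mul_of_nonneg_right (hβhi τ) (Real.exp_pos _).le
          · exact hFle τ hτ0
          · exact hF0 τ hτ0
          · positivity
      _ = τ * Real.exp (-u * τ) := by ring
  have hg2int : IntegrableOn
      (fun τ : ℝ => βr0 τ * Real.exp (-u * τ) * ∫ h in (0:ℝ)..τ, βr0 h) (Ioi 0) := by
    refine htexpint.mono' hg2c.aestronglyMeasurable.restrict ?_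
    refine (ae_restrict_iff' measurableSet_Ioi).mpr (ae_of_all _ (fun τ hτ => ?_))
    have hτ0 : (0:ℝ) ≤ τ := le_of_lt hτ
    rw [Real.norm_eq_abs, abs_of_nonneg (mul_nonneg (mul_nonneg (hβ0 τ) (Real.exp_pos _).le)
      (hF0 τ hτ0))]
    exact hg2bound τ hτ
  have hJlo : 0 ≤ ∫ τ in Ioi (0:ℝ), βr0 τ * Real.exp (-u * τ) * ∫ h in (0:ℝ)..τ, βr0 h :=
    setIntegral_nonneg measurableSet_Ioi (fun τ hτ =>
      mul_nonneg (mul_nonneg (hβ0 τ) (Real.exp_pos _).le) (hF0 τ (le_of_lt hτ)))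
  have hJhi : (∫ τ in Ioi (0:ℝ), βr0 τ * Real.exp (-u * τ) * ∫ h in (0:ℝ)..τ, βr0 h)
      ≤ 1 / u ^ 2 := by
    rw [← htexpval]
    exact setIntegral_mono_on hg2int htexpint measurableSet_Ioi hg2bound
  -- rewrite βstar
  rw [hIr, hN0, hr0val, hS0] at hβstar
  -- substitute numbers
  subst hΛ hθ hε hu hα hσ hρ hγA hγI hμ hβs hη hK
  set x := ∫ τ in Ioi (0:ℝ), βr0 τ * Real.exp (-(1 / (75 * 365)) * τ) with hxdef
  set y := ∫ τ in Ioi (0:ℝ), βr0 τ * Real.exp (-(1 / (75 * 365)) * τ) * ∫ h in (0:ℝ)..τ, βr0 h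
    with hydef
  norm_num at hI1lo hI1hi hJhi hβstar
  have hxpos : (0:ℝ) < x := by linarith
  have hcx : (0:ℝ) < 4380000 / 8219 * x := by positivity
  have hblo : (0.125:ℝ) ≤ βstar := by
    rw [hβstar, le_div_iff₀ hcx]
    nlinarith [hI1hi]
  have hbhi : βstar ≤ 0.158 := by
    rw [hβstar, div_le_iff₀ hcx]
    nlinarith [hI1lo]
  have hb0 : (0:ℝ) ≤ βstar := le_trans (by norm_num) hblo
  have h1 : (0.125:ℝ) * 21900 ≤ βstar * x := mul_le_mul hblo hI1lo (by norm_num) hb0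
  have h2 : βstar * x ≤ 0.158 * 27375 := mul_le_mul hbhi hI1hi hxpos.le (by norm_num)
  have hb2 : βstar ^ 2 ≤ 0.158 ^ 2 := by nlinarith
  have h3 : βstar ^ 2 * y ≤ 0.158 ^ 2 * 749390625 := mul_le_mul hb2 hJhi hJlo (by norm_num)
  rw [ha]
  apply mul_pos (by norm_num)
  nlinarith [h1, h2, h3, hJlo, hb0, hxpos]
end

section
/- For the parameter values Λ = 20000, θ = 0.55, ε = 0.55, u = 1/(75·365), α = 10⁻⁶, σ = 1/5.2, ρ = 0.4, γ_A = 1/14, γ_I = 1/7, μ = 0.02, β_s = 0.10345, and β_{r0}(τ) = 1−η for 0 ≤ τ < τ̂, β_{r0}(τ) = 1 − η·e^{−γ(τ−τ̂)} for τ ≥ τ̂ with τ̂ = 200, η = 0.2, γ = 0.5, the bifurcation coefficient a is strictly negative: a < 0 (so the model undergoes a forward transcritical bifurcation at R₀ = 1). -/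
open MeasureTheory Real Set Filter

set_option maxHeartbeats 1000000 in
/-- for the paper's parameter values with `β_s = 0.10345`, the bifurcation
coefficient satisfies `a < 0`, so the model undergoes a forward transcritical
bifurcation at `R₀ = 1`. -/
theorem stmt18
    (Λ u μ σ γA γI α βs ρ θ ε τh η γ : ℝ)
    (hΛ : Λ = 20000) (hθ : θ = 0.55) (hε : ε = 0.55)
    (hu : u = 1 / (75 * 365)) (hα : α = 1 / 10 ^ 6) (hσ : σ = 1 / 5.2)
    (hρ : ρ = 0.4) (hγA : γA = 1 / 14) (hγI : γI = 1 / 7) (hμ : μ = 0.02)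
    (hβs : βs = 0.10345) (hτh : τh = 200) (hη : η = 0.2) (hγ : γ = 0.5)
    (βr0 : ℝ → ℝ)
    (hβr0 : ∀ τ, βr0 τ =
      if τ < τh then 1 - η else 1 - η * Real.exp (-γ * (τ - τh)))
    (S0 : ℝ) (hS0 : S0 = Λ / (α + u))
    (r0 : ℝ → ℝ) (hr0 : ∀ τ, r0 τ = α * Λ / (α + u) * Real.exp (-u * τ))
    (N0 : ℝ) (hN0 : N0 = S0 + ∫ τ in Set.Ioi (0:ℝ), r0 τ)
    (K : ℝ) (hK : K = θ + (1 - ρ) * σ * ε / (γA + u) + ρ * σ / (γI + μ + u))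
    (βstar : ℝ)
    (hβstar : βstar =
      ((σ + u) * N0 / K - βs * S0) / ∫ τ in Set.Ioi (0:ℝ), βr0 τ * r0 τ)
    (a : ℝ)
    (ha : a = 2 * u / Λ * K *
      (βstar * (α * (σ + u) / (α + u) + γA * (1 - ρ) * σ / (γA + u)
          + γI * ρ * σ / (γI + μ + u)) *
        (∫ τ in Set.Ioi (0:ℝ), βr0 τ * Real.exp (-u * τ))
      - u / (α + u) *
        (βs + α * βstar * ∫ τ in Set.Ioi (0:ℝ), βr0 τ * Real.exp (-u * τ)) *
        (1 + (1 - ρ) * σ / u + (γI + u) * ρ * σ / (γI + μ + u))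
      - α * u / (α + u) * βstar ^ 2 * K *
        (∫ τ in Set.Ioi (0:ℝ),
          βr0 τ * Real.exp (-u * τ) * ∫ h in (0:ℝ)..τ, βr0 h))) :
    a < 0 := by
  have hu0 : 0 < u := by rw [hu]; norm_num
  have hα0 : 0 < α := by rw [hα]; norm_num
  have hαu : 0 < α + u := by linarith
  -- bounds on βr0
  have hβlb : ∀ τ : ℝ, 0.8 ≤ βr0 τ := by
    intro τ
    rw [hβr0 τ]
    split_ifs with h
    · rw [hη]; norm_num
    · push_neg at h
      have h2 : -γ * (τ - τh) ≤ 0 := by rw [hγ]; rw [hτh] at h; nlinarith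
      have h3 : Real.exp (-γ * (τ - τh)) ≤ 1 := Real.exp_le_one_iff.mpr h2
      rw [hη]; nlinarith
  have hβ0 : ∀ τ : ℝ, 0 ≤ βr0 τ := fun τ => le_trans (by norm_num) (hβlb τ)
  have hβub : ∀ τ : ℝ, βr0 τ ≤ 1 := by
    intro τ; rw [hβr0 τ]; split_ifs with h
    · rw [hη]; norm_num
    · have h3 := Real.exp_pos (-γ * (τ - τh))
      rw [hη]; nlinarith
  have hmeas : Measurable βr0 := by
    have hfe : βr0 = fun τ => if τ < τh then 1 - η
        else 1 - η * Real.exp (-γ * (τ - τh)) := funext hβr0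
    rw [hfe]
    exact Measurable.ite (measurableSet_lt measurable_id measurable_const)
      measurable_const (by fun_prop)
  -- integrability and positivity of J
  have hexpInt : IntegrableOn (fun τ : ℝ => Real.exp (-u * τ)) (Ioi 0) :=
    exp_neg_integrableOn_Ioi 0 hu0
  have hJint : IntegrableOn (fun τ => βr0 τ * Real.exp (-u * τ)) (Ioi 0) := by
    have hm2 : Measurable (fun τ => βr0 τ * Real.exp (-u * τ)) := by
      exact hmeas.mul (by fun_prop)
    refine MeasureTheory.Integrable.mono hexpInt hm2.aestronglyMeasurable.restrict ?_
    filter_upwards with τ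
    rw [norm_mul, Real.norm_eq_abs, Real.norm_eq_abs,
      abs_of_nonneg (hβ0 τ), abs_of_nonneg (Real.exp_pos _).le]
    nlinarith [Real.exp_pos (-u * τ), hβub τ]
  have hE : (∫ τ in Ioi (0:ℝ), Real.exp (-u * τ)) = u⁻¹ := by
    have h := integral_comp_mul_left_Ioi (fun x => Real.exp (-x)) 0 hu0
    simp only [mul_zero, integral_exp_neg_Ioi_zero, smul_eq_mul, mul_one, neg_mul] at h ⊢
    exact h
  have hJlb : 0.8 * u⁻¹ ≤ ∫ τ in Ioi (0:ℝ), βr0 τ * Real.exp (-u * τ) := by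
    rw [← hE, ← MeasureTheory.integral_const_mul]
    exact setIntegral_mono_on (hexpInt.const_mul _) hJint measurableSet_Ioi
      (fun τ _ => mul_le_mul_of_nonneg_right (hβlb τ) (Real.exp_pos _).le)
  set J := ∫ τ in Set.Ioi (0:ℝ), βr0 τ * Real.exp (-u * τ) with hJdef
  have hJ0 : 0 < J := lt_of_lt_of_le (by positivity) hJlb
  set I3 := ∫ τ in Set.Ioi (0:ℝ),
      βr0 τ * Real.exp (-u * τ) * ∫ h in (0:ℝ)..τ, βr0 h with hI3def
  have hI3 : 0 ≤ I3 := by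
    rw [hI3def]
    refine setIntegral_nonneg measurableSet_Ioi (fun τ hτ => ?_)
    exact mul_nonneg (mul_nonneg (hβ0 τ) (Real.exp_pos _).le)
      (intervalIntegral.integral_nonneg (le_of_lt hτ) (fun x _ => hβ0 x))
  -- rewrite the two auxiliary integrals
  have hc : (∫ τ in Set.Ioi (0:ℝ), βr0 τ * r0 τ) = α * Λ / (α + u) * J := by
    rw [hJdef, ← MeasureTheory.integral_const_mul]
    refine setIntegral_congr_fun measurableSet_Ioi (fun τ _ => ?_)
    rw [hr0]; ring
  have hr0int : (∫ τ in Set.Ioi (0:ℝ), r0 τ) = α * Λ / (α + u) * u⁻¹ := by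
    rw [← hE, ← MeasureTheory.integral_const_mul]
    exact setIntegral_congr_fun measurableSet_Ioi (fun τ _ => hr0 τ)
  rw [hc] at hβstar
  rw [hr0int] at hN0
  have hcne : α * Λ / (α + u) ≠ 0 := by rw [hΛ]; positivity
  have hv : βstar * J = ((σ + u) * N0 / K - βs * S0) / (α * Λ / (α + u)) := by
    rw [hβstar]
    field_simp
  have key : a = 2 * u / Λ * K *
      ((βstar * J) * (α * (σ + u) / (α + u) + γA * (1 - ρ) * σ / (γA + u)
          + γI * ρ * σ / (γI + μ + u))
      - u / (α + u) * (βs + α * (βstar * J)) *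
        (1 + (1 - ρ) * σ / u + (γI + u) * ρ * σ / (γI + μ + u)))
      - (2 * u / Λ * (α * u / (α + u))) * ((K * βstar) ^ 2 * I3) := by
    rw [ha]; ring
  rw [hv] at key
  have hnonneg : 0 ≤ (2 * u / Λ * (α * u / (α + u))) * ((K * βstar) ^ 2 * I3) := by
    refine mul_nonneg ?_ (mul_nonneg (sq_nonneg _) hI3)
    rw [hΛ, hu, hα]; norm_num
  have hmain : 2 * u / Λ * K *
      ((((σ + u) * N0 / K - βs * S0) / (α * Λ / (α + u))) *
        (α * (σ + u) / (α + u) + γA * (1 - ρ) * σ / (γA + u)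
          + γI * ρ * σ / (γI + μ + u))
      - u / (α + u) * (βs + α * ((((σ + u) * N0 / K - βs * S0) / (α * Λ / (α + u))))) *
        (1 + (1 - ρ) * σ / u + (γI + u) * ρ * σ / (γI + μ + u))) < 0 := by
    subst hS0
    subst hN0
    subst hK
    subst hΛ hθ hε hu hα hσ hρ hγA hγI hμ hβs
    norm_num
  linarith [key, hmain, hnonneg]
end
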